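/- Let n, k ∈ ℕ with k < n, let H ⊆ ℝ with |H| ≥ n+1, let ω = (ω₁, …, ω_n) : H → ℝⁿ be an n-dimensional positive Chebyshev system over H such that ω_{⟨k⟩} and ω_{⟨k+1⟩} are k- and (k+1)-dimensional positive Chebyshev systems over H, and let f : H → ℝ. Suppose there exists ℓ ∈ {0, …, k} such that for every k-tuple x₁ < … < x_k in H, the function x ↦ [x₁, …, x_k, x; f]_{ω_{⟨k+1⟩}} is convex with respect to the (n−k)-dimensional Chebyshev system formed by the functions x ↦ [x₁, …, x_k, x; ω_j]_{ω_{⟨k+1⟩}} (j ∈ {k+1, …, n}) on H ∩ (−∞, x₁) if ℓ = 0, on H ∩ (x_ℓ, x_{ℓ+1}) if 0 < ℓ < k, and on H ∩ (x_k, +∞) if ℓ = k. Then f is ω-convex on H. -/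

import Mathlib

/-- `Φ_ω(x₁,…,x_m) = det(ω_i(x_j))`. -/
noncomputable def Phi {m : ℕ} (ω : Fin m → ℝ → ℝ) (x : Fin m → ℝ) : ℝ :=
  Matrix.det (Matrix.of fun i j => ω i (x j))

/-- `ω` is an `m`-dimensional positive Chebyshev system over `H`. -/
def IsPosChebyshev {m : ℕ} (ω : Fin m → ℝ → ℝ) (H : Set ℝ) : Prop :=
  ∀ x : Fin m → ℝ, (∀ i, x i ∈ H) → StrictMono x → 0 < Phi ω x

/-- `f` is convex with respect to the `m`-dimensional system `ω` on `S`. -/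
def IsConvexWRT {m : ℕ} (ω : Fin m → ℝ → ℝ) (S : Set ℝ) (f : ℝ → ℝ) : Prop :=
  ∀ x : Fin (m + 1) → ℝ, (∀ i, x i ∈ S) → StrictMono x → 0 ≤ Phi (Fin.snoc ω f) x

/-- The generalized divided difference `[x₁,…,x_k; f]_{ω⟨k⟩}`:
the numerator replaces the last function `ω_k` by `f`. -/
noncomputable def divDiff {k : ℕ} (ω : Fin k → ℝ → ℝ) (f : ℝ → ℝ) (x : Fin k → ℝ) : ℝ :=
  Phi (fun i => if (i : ℕ) + 1 = k then f else ω i) x / Phi ω x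

lemma snoc_apply_lt {n : ℕ} {α : Sort*} (v : Fin n → α) (a : α) (p : Fin (n+1)) (h : (p:ℕ) < n) :
    (Fin.snoc v a : Fin (n+1) → α) p = v ⟨p, h⟩ := by
  simp [Fin.snoc, h]
  rfl

lemma snoc_apply_eq {n : ℕ} {α : Sort*} (v : Fin n → α) (a : α) (p : Fin (n+1)) (h : (p:ℕ) = n) :
    (Fin.snoc v a : Fin (n+1) → α) p = a := by
  simp [Fin.snoc, h]

open Fin.NatCast Fin.CommRing in
lemma finRotate_pow (N t : ℕ) (q : Fin (N+1)) :
    ((finRotate (N+1))^t) q = q + (t : Fin (N+1)) := by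
  induction t with
  | zero => simp
  | succ t ih =>
    rw [pow_succ', Equiv.Perm.mul_apply, ih, finRotate_succ_apply]
    push_cast
    ring

open Fin.NatCast Fin.CommRing in
lemma finRotate_pow_val (N t : ℕ) (q : Fin (N+1)) :
    ((((finRotate (N+1))^t) q : Fin (N+1)) : ℕ) = ((q:ℕ) + t) % (N+1) := by
  rw [finRotate_pow]
  simp [Fin.add_def, Fin.val_natCast, Nat.add_mod_mod]

open Matrix in
lemma sylvester_aux {k m : ℕ} (A : Matrix (Fin k) (Fin k) ℝ) (B : Matrix (Fin k) (Fin m) ℝ)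
    (C : Matrix (Fin m) (Fin k) ℝ) (D : Matrix (Fin m) (Fin m) ℝ) (hA : A.det ≠ 0) :
    (Matrix.det (Matrix.of fun i j : Fin m =>
      (Matrix.fromBlocks A (Matrix.of fun r (_ : Fin 1) => B r j)
        (Matrix.of fun (_ : Fin 1) c => C i c)
        (Matrix.of fun (_ : Fin 1) (_ : Fin 1) => D i j)).det)) * A.det
    = A.det ^ m * (Matrix.fromBlocks A B C D).det := by
  have : Invertible A := A.invertibleOfIsUnitDet (isUnit_iff_ne_zero.2 hA)
  have h1 : ∀ i j : Fin m, (Matrix.fromBlocks A (Matrix.of fun r (_ : Fin 1) => B r j)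
        (Matrix.of fun (_ : Fin 1) c => C i c)
        (Matrix.of fun (_ : Fin 1) (_ : Fin 1) => D i j)).det
      = A.det * (D - C * ⅟A * B) i j := by
    intro i j
    rw [Matrix.det_fromBlocks₁₁, Matrix.det_fin_one]
    congr 1
  have h2 : (Matrix.of fun i j : Fin m =>
      (Matrix.fromBlocks A (Matrix.of fun r (_ : Fin 1) => B r j)
        (Matrix.of fun (_ : Fin 1) c => C i c)
        (Matrix.of fun (_ : Fin 1) (_ : Fin 1) => D i j)).det)
      = A.det • (D - C * ⅟A * B) := by
    ext i j
    simp only [Matrix.of_apply, Matrix.smul_apply, smul_eq_mul]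
    exact h1 i j
  rw [h2, Matrix.det_smul, Matrix.det_fromBlocks₁₁]
  simp [Fintype.card_fin]
  ring


set_option maxHeartbeats 2000000 in
/-- Theorem 2, (iii) ⇒ (i): if there exists `ℓ ∈ {0,…,k}` such that, for each
`x₁ < … < x_k` in `H`, the function `x ↦ [x₁,…,x_k,x; f]_{ω⟨k+1⟩}` is convex with respect to
the `(n-k)`-dimensional system `x ↦ [x₁,…,x_k,x; ω_j]_{ω⟨k+1⟩}` on `H ∩ (-∞, x₁)` if `ℓ = 0`,
on `H ∩ (x_ℓ, x_{ℓ+1})` if `0 < ℓ < k`, and on `H ∩ (x_k, ∞)` if `ℓ = k` (these three cases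
are captured uniformly by the set `{y | x_i < y for i ≤ ℓ and y < x_i for i > ℓ}`),
then `f` is `ω`-convex on `H`. -/
theorem divided_difference_convex_implies_omega_convex (n k : ℕ) (hk : k < n) (H : Set ℝ)
    (hH : n + 1 ≤ H.ncard ∨ H.Infinite)
    (ω : Fin n → ℝ → ℝ) (f : ℝ → ℝ)
    (hω : IsPosChebyshev ω H)
    (hωk : IsPosChebyshev (fun i : Fin k => ω (Fin.castLE (by omega) i)) H)
    (hωk1 : IsPosChebyshev (fun i : Fin (k + 1) => ω (Fin.castLE hk i)) H)
    (hyp : ∃ ℓ : ℕ, ℓ ≤ k ∧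
      ∀ x : Fin k → ℝ, (∀ i, x i ∈ H) → StrictMono x →
        IsConvexWRT
          (fun j : Fin (n - k) => fun y : ℝ =>
            divDiff (fun i : Fin (k + 1) => ω (Fin.castLE hk i))
              (ω ⟨k + (j : ℕ), by have := j.isLt; omega⟩) (Fin.snoc x y))
          (H ∩ {y : ℝ | (∀ i : Fin k, (i : ℕ) < ℓ → x i < y) ∧
            (∀ i : Fin k, ℓ ≤ (i : ℕ) → y < x i)})
          (fun y : ℝ =>
            divDiff (fun i : Fin (k + 1) => ω (Fin.castLE hk i)) f (Fin.snoc x y))) :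
    IsConvexWRT ω H f := by
  obtain ⟨ℓ, hℓk, hcvx⟩ := hyp
  intro z hzH hz
  have hkn : k ≤ n := hk.le
  have hℓn : ℓ ≤ n := le_trans hℓk hkn
  -- the k base points and the (n-k+1) inner points
  set x : Fin k → ℝ := fun i =>
    if (i:ℕ) < ℓ then z ⟨i, by have := i.isLt; omega⟩
    else z ⟨(i:ℕ) + (n-k) + 1, by have := i.isLt; omega⟩ with hxdef
  set y : Fin (n-k+1) → ℝ := fun j => z ⟨ℓ + j, by have := j.isLt; omega⟩ with hydef
  have hzlt : ∀ (a b : Fin (n+1)), (a:ℕ) < (b:ℕ) → z a < z b := by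
    intro a b hab
    exact hz (by exact hab)
  have hxH : ∀ i, x i ∈ H := by
    intro i
    rw [hxdef]
    dsimp only
    split_ifs <;> apply hzH
  have hxm : StrictMono x := by
    intro a b hab
    have hab' : (a:ℕ) < (b:ℕ) := hab
    rw [hxdef]
    dsimp only
    split_ifs with h1 h2 h2 <;> [skip; skip; omega; skip] <;> (apply hzlt; simp; omega)
  have hyH : ∀ j, y j ∈ H := fun j => hzH _
  have hym : StrictMono y := by
    intro a b hab
    have hab' : (a:ℕ) < (b:ℕ) := hab
    apply hzlt
    simp
    exact hab'
  have hxy1 : ∀ (i : Fin k) (j : Fin (n-k+1)), (i:ℕ) < ℓ → x i < y j := by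
    intro i j hi
    rw [hxdef]
    dsimp only
    rw [if_pos hi]
    apply hzlt
    simp
    omega
  have hxy2 : ∀ (i : Fin k) (j : Fin (n-k+1)), ℓ ≤ (i:ℕ) → y j < x i := by
    intro i j hi
    rw [hxdef]
    dsimp only
    rw [if_neg (by omega)]
    apply hzlt
    have := j.isLt
    simp
    omega
  -- first k+1 functions
  set ωk1 : Fin (k+1) → ℝ → ℝ := fun i => ω (Fin.castLE hk i) with hωk1def
  -- sorted insertion of y j into x
  set s : Fin (n-k+1) → Fin (k+1) → ℝ := fun j p =>
    if h1 : (p:ℕ) < ℓ then x ⟨p, by omega⟩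
    else if h2 : (p:ℕ) = ℓ then y j
    else x ⟨(p:ℕ) - 1, by have := p.isLt; omega⟩ with hsdef
  have hsH : ∀ j p, s j p ∈ H := by
    intro j p
    rw [hsdef]
    dsimp only
    split_ifs <;> first | apply hxH | apply hyH
  have hsm : ∀ j, StrictMono (s j) := by
    intro j a b hab
    have hab' : (a:ℕ) < (b:ℕ) := hab
    rw [hsdef]
    dsimp only
    split_ifs <;>
      first
        | omega
        | (exact hxm (show _ < _ from by simp only [Fin.mk_lt_mk]; omega))
        | (exact hxy1 _ _ (by simp only [Fin.val_mk]; omega))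
        | (exact hxy2 _ _ (by simp only [Fin.val_mk]; omega))
  have hQ : ∀ j, 0 < Phi ωk1 (s j) := fun j => hωk1 (s j) (hsH j) (hsm j)
  have hkk : ℓ + (k - ℓ + 1) = k + 1 := by omega
  set E3 : Fin ℓ ⊕ Fin (k-ℓ+1) ≃ Fin (k+1) := finSumFinEquiv.trans (finCongr hkk) with hE3def
  set ρ : Equiv.Perm (Fin (k+1)) :=
    E3.permCongr (Equiv.sumCongr (Equiv.refl (Fin ℓ)) (finRotate (k-ℓ+1))) with hρdef
  have hE3l : ∀ i : Fin ℓ, ((E3 (Sum.inl i) : Fin (k+1)) : ℕ) = (i:ℕ) := by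
    intro i; simp [hE3def]
  have hE3r : ∀ q : Fin (k-ℓ+1), ((E3 (Sum.inr q) : Fin (k+1)) : ℕ) = ℓ + q := by
    intro q; simp [hE3def]
  have hρval : ∀ p : Fin (k+1), ((ρ p : Fin (k+1)) : ℕ)
      = if (p:ℕ) < ℓ then (p:ℕ) else (if (p:ℕ) < k then (p:ℕ)+1 else ℓ) := by
    intro p
    rcases Nat.lt_or_ge (p:ℕ) ℓ with h | h
    · have hsymm : E3.symm p = Sum.inl ⟨p, h⟩ := by
        rw [Equiv.symm_apply_eq]
        apply Fin.ext
        rw [hE3l]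
      rw [hρdef]
      rw [Equiv.permCongr_apply, hsymm]
      simp only [Equiv.sumCongr_apply, Sum.map_inl, Equiv.refl_apply]
      rw [hE3l, if_pos h]
    · have hsymm : E3.symm p = Sum.inr ⟨(p:ℕ) - ℓ, by have := p.isLt; omega⟩ := by
        rw [Equiv.symm_apply_eq]
        apply Fin.ext
        rw [hE3r]
        simp
        omega
      rw [hρdef]
      rw [Equiv.permCongr_apply, hsymm]
      simp only [Equiv.sumCongr_apply, Sum.map_inr]
      rw [hE3r]
      have hrot : ((finRotate (k-ℓ+1) (⟨(p:ℕ) - ℓ, by have := p.isLt; omega⟩ : Fin (k-ℓ+1))) : ℕ)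
          = ((p:ℕ) - ℓ + 1) % (k-ℓ+1) := by
        rw [← pow_one (finRotate (k-ℓ+1))]
        exact finRotate_pow_val (k-ℓ) 1 _
      rw [hrot, if_neg (by omega)]
      have := p.isLt
      rcases Nat.lt_or_ge (p:ℕ) k with h2 | h2
      · rw [if_pos h2, Nat.mod_eq_of_lt (by omega)]
        omega
      · rw [if_neg (by omega)]
        have hpk : (p:ℕ) - ℓ + 1 = k - ℓ + 1 := by omega
        rw [hpk, Nat.mod_self]
        omega
  have hPsign : ∀ j, Phi ωk1 (Fin.snoc x (y j)) = ((-1:ℝ)^(k-ℓ)) * Phi ωk1 (s j) := by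
    intro j
    have hpoint : ∀ p : Fin (k+1), (Fin.snoc x (y j) : Fin (k+1) → ℝ) p = s j (ρ p) := by
      intro p
      have hv := hρval p
      rcases Nat.lt_or_ge (p:ℕ) k with hpk | hpk
      · rcases Nat.lt_or_ge (p:ℕ) ℓ with hpl | hpl
        · rw [if_pos hpl] at hv
          rw [snoc_apply_lt _ _ _ hpk, hsdef]
          dsimp only
          split_ifs with h1 h2 <;>
            first
              | omega
              | (congr 1; apply Fin.ext; simp only [Fin.val_mk]; omega)
        · rw [if_neg (by omega), if_pos hpk] at hv
          rw [snoc_apply_lt _ _ _ hpk, hsdef]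
          dsimp only
          split_ifs with h1 h2 <;>
            first
              | omega
              | (congr 1; apply Fin.ext; simp only [Fin.val_mk]; omega)
      · have hpk' : (p:ℕ) = k := by have := p.isLt; omega
        rw [if_neg (by omega), if_neg (by omega)] at hv
        rw [snoc_apply_eq _ _ _ hpk', hsdef]
        dsimp only
        split_ifs with h1 h2 <;> first | rfl | omega
    have hmat : (Matrix.of fun i p => ωk1 i ((Fin.snoc x (y j) : Fin (k+1) → ℝ) p))
        = (Matrix.of fun i p => ωk1 i (s j p)).submatrix id ρ := by
      ext i p
      simp only [Matrix.submatrix_apply, Matrix.of_apply, id_eq]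
      rw [hpoint p]
    have hdet : Phi ωk1 (Fin.snoc x (y j)) = ((Equiv.Perm.sign ρ : ℤ) : ℝ) * Phi ωk1 (s j) := by
      show (Matrix.of fun i p => ωk1 i ((Fin.snoc x (y j) : Fin (k+1) → ℝ) p)).det = _
      rw [hmat, Matrix.det_permute']
      rfl
    have hsgn : Equiv.Perm.sign ρ = (-1)^(k-ℓ) := by
      rw [hρdef, Equiv.Perm.sign_permCongr, Equiv.Perm.sign_sumCongr]
      simp [sign_finRotate]
    rw [hdet, hsgn]
    norm_num
  have hyS : ∀ jj : Fin (n-k+1), y jj ∈ H ∩ {y' : ℝ | (∀ i : Fin k, (i:ℕ) < ℓ → x i < y') ∧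
      (∀ i : Fin k, ℓ ≤ (i:ℕ) → y' < x i)} :=
    fun jj => ⟨hyH jj, fun i hi => hxy1 i jj hi, fun i hi => hxy2 i jj hi⟩
  have hG := hcvx x hxH hxm y hyS hym
  set ψ : Fin (n-k+1) → ℝ → ℝ :=
    Fin.snoc (fun j : Fin (n-k) => ω ⟨k + (j:ℕ), by have := j.isLt; omega⟩) f with hψdef
  set Emat : Matrix (Fin (n-k+1)) (Fin (n-k+1)) ℝ := Matrix.of (fun i j =>
    Phi (fun r : Fin (k+1) => if (r:ℕ) + 1 = k + 1 then ψ i else ωk1 r) (Fin.snoc x (y j)))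
    with hEdef
  have hP0 : ∀ j, Phi ωk1 (Fin.snoc x (y j)) ≠ 0 := by
    intro j
    rw [hPsign j]
    exact mul_ne_zero (pow_ne_zero _ (by norm_num)) (ne_of_gt (hQ j))
  have step1 : Phi (Fin.snoc
        (fun (j : Fin (n-k)) (y' : ℝ) =>
          divDiff ωk1 (ω ⟨k + (j:ℕ), by have := j.isLt; omega⟩) (Fin.snoc x y'))
        (fun y' => divDiff ωk1 f (Fin.snoc x y'))) y
      = (∏ jj, (Phi ωk1 (Fin.snoc x (y jj)))⁻¹) * Emat.det := by
    have hentry : ∀ (i jj : Fin (n-k+1)),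
        (Fin.snoc (fun (j : Fin (n-k)) (y' : ℝ) =>
            divDiff ωk1 (ω ⟨k + (j:ℕ), by have := j.isLt; omega⟩) (Fin.snoc x y'))
          (fun y' => divDiff ωk1 f (Fin.snoc x y')) : Fin (n-k+1) → ℝ → ℝ) i (y jj)
        = (Phi ωk1 (Fin.snoc x (y jj)))⁻¹ * Emat i jj := by
      intro i jj
      rcases Nat.lt_or_ge (i:ℕ) (n-k) with hi | hi
      · rw [snoc_apply_lt _ _ _ hi]
        have hψi : ψ i = ω ⟨k + (i:ℕ), by have := i.isLt; omega⟩ := by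
          rw [hψdef]
          exact snoc_apply_lt _ _ _ hi
        rw [hEdef]
        show divDiff ωk1 _ _ = _
        rw [divDiff, div_eq_inv_mul]
        congr 2
        rw [hψi]
      · have hi' : (i:ℕ) = n-k := by have := i.isLt; omega
        rw [snoc_apply_eq _ _ _ hi']
        have hψi : ψ i = f := by
          rw [hψdef]
          exact snoc_apply_eq _ _ _ hi'
        rw [hEdef]
        show divDiff ωk1 f _ = _
        rw [divDiff, div_eq_inv_mul]
        congr 2
        rw [hψi]
    show (Matrix.of fun i jj => _).det = _
    rw [show (Matrix.of fun i jj =>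
        (Fin.snoc (fun (j : Fin (n-k)) (y' : ℝ) =>
            divDiff ωk1 (ω ⟨k + (j:ℕ), by have := j.isLt; omega⟩) (Fin.snoc x y'))
          (fun y' => divDiff ωk1 f (Fin.snoc x y')) : Fin (n-k+1) → ℝ → ℝ) i (y jj))
      = Matrix.of fun i jj => (Phi ωk1 (Fin.snoc x (y jj)))⁻¹ * Emat i jj from by
        ext i jj
        exact hentry i jj]
    exact Matrix.det_mul_row _ _
  set Amat : Matrix (Fin k) (Fin k) ℝ := Matrix.of (fun i i' => ω (Fin.castLE hkn i) (x i')) with hAdef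
  set Bmat : Matrix (Fin k) (Fin (n-k+1)) ℝ :=
    Matrix.of (fun i j => ω (Fin.castLE hkn i) (y j)) with hBdef
  set Cmat : Matrix (Fin (n-k+1)) (Fin k) ℝ := Matrix.of (fun j i' => ψ j (x i')) with hCdef
  set Dmat : Matrix (Fin (n-k+1)) (Fin (n-k+1)) ℝ := Matrix.of (fun j j' => ψ j (y j')) with hDdef
  have hAdet : 0 < Amat.det := hωk x hxH hxm
  have hEFB : ∀ i j, Emat i j = (Matrix.fromBlocks Amat
      (Matrix.of fun r (_ : Fin 1) => Bmat r j)
      (Matrix.of fun (_ : Fin 1) c => Cmat i c)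
      (Matrix.of fun (_ : Fin 1) (_ : Fin 1) => Dmat i j)).det := by
    intro i j
    rw [hEdef]
    show (Matrix.of fun (r p : Fin (k+1)) =>
      (if (r:ℕ) + 1 = k + 1 then ψ i else ωk1 r) ((Fin.snoc x (y j) : Fin (k+1) → ℝ) p)).det = _
    rw [← Matrix.det_submatrix_equiv_self (finSumFinEquiv : Fin k ⊕ Fin 1 ≃ Fin (k+1))]
    congr 1
    ext rc pc
    rcases rc with r | r <;> rcases pc with c | c <;>
      simp only [Matrix.submatrix_apply, finSumFinEquiv_apply_left, finSumFinEquiv_apply_right,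
        Matrix.fromBlocks_apply₁₁, Matrix.fromBlocks_apply₁₂, Matrix.fromBlocks_apply₂₁,
        Matrix.fromBlocks_apply₂₂, Matrix.of_apply]
    · rw [if_neg (by simp only [Fin.coe_castAdd]; omega),
        snoc_apply_lt _ _ _ (show ((Fin.castAdd 1 c : Fin (k+1)) : ℕ) < k from c.isLt)]
      rfl
    · rw [if_neg (by simp only [Fin.coe_castAdd]; omega),
        snoc_apply_eq _ _ _ (show ((Fin.natAdd k c : Fin (k+1)) : ℕ) = k from by
          simp only [Fin.coe_natAdd]; omega)]
      rfl
    · rw [if_pos (by simp only [Fin.coe_natAdd]; omega),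
        snoc_apply_lt _ _ _ (show ((Fin.castAdd 1 c : Fin (k+1)) : ℕ) < k from c.isLt)]
      rfl
    · rw [if_pos (by simp only [Fin.coe_natAdd]; omega),
        snoc_apply_eq _ _ _ (show ((Fin.natAdd k c : Fin (k+1)) : ℕ) = k from by
          simp only [Fin.coe_natAdd]; omega)]
      rfl
  have step2 : Emat.det * Amat.det
      = Amat.det ^ (n-k+1) * (Matrix.fromBlocks Amat Bmat Cmat Dmat).det := by
    have h := sylvester_aux Amat Bmat Cmat Dmat (ne_of_gt hAdet)
    rw [← h]
    congr 2
    ext i j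
    exact hEFB i j
  have hkn1 : k + (n - k + 1) = n + 1 := by omega
  set e4 : Fin k ⊕ Fin (n-k+1) ≃ Fin (n+1) := finSumFinEquiv.trans (finCongr hkn1) with he4def
  set w : Fin (n+1) → ℝ := fun p =>
    if h : (p:ℕ) < k then x ⟨p, h⟩ else y ⟨(p:ℕ) - k, by have := p.isLt; omega⟩ with hwdef
  have he4l : ∀ r : Fin k, ((e4 (Sum.inl r) : Fin (n+1)) : ℕ) = (r:ℕ) := by
    intro r; simp [he4def]
  have he4r : ∀ c : Fin (n-k+1), ((e4 (Sum.inr c) : Fin (n+1)) : ℕ) = k + (c:ℕ) := by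
    intro c; simp [he4def]
  have hwl : ∀ c : Fin k, w (e4 (Sum.inl c)) = x c := by
    intro c
    rw [hwdef]
    dsimp only
    rw [dif_pos (show ((e4 (Sum.inl c) : Fin (n+1)) : ℕ) < k from by rw [he4l]; omega)]
    exact congrArg x (by apply Fin.ext; simp only [Fin.val_mk]; rw [he4l])
  have hwr : ∀ c : Fin (n-k+1), w (e4 (Sum.inr c)) = y c := by
    intro c
    rw [hwdef]
    dsimp only
    rw [dif_neg (show ¬ ((e4 (Sum.inr c) : Fin (n+1)) : ℕ) < k from by rw [he4r]; omega)]
    exact congrArg y (by apply Fin.ext; simp only [Fin.val_mk]; rw [he4r]; omega)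
  have hrowl : ∀ r : Fin k, (Fin.snoc ω f : Fin (n+1) → ℝ → ℝ) (e4 (Sum.inl r))
      = ω (Fin.castLE hkn r) := by
    intro r
    rw [snoc_apply_lt (α := ℝ → ℝ) _ _ _ (show ((e4 (Sum.inl r) : Fin (n+1)) : ℕ) < n from by
      rw [he4l]; omega)]
    exact congrArg ω (by apply Fin.ext; simp only [Fin.val_mk, Fin.coe_castLE]; rw [he4l])
  have hrowr : ∀ r : Fin (n-k+1), (Fin.snoc ω f : Fin (n+1) → ℝ → ℝ) (e4 (Sum.inr r)) = ψ r := by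
    intro r
    rcases Nat.lt_or_ge (r:ℕ) (n-k) with hr | hr
    · rw [snoc_apply_lt (α := ℝ → ℝ) _ _ _ (show ((e4 (Sum.inr r) : Fin (n+1)) : ℕ) < n from by
        rw [he4r]; omega)]
      rw [hψdef, snoc_apply_lt _ _ _ hr]
      exact congrArg ω (by apply Fin.ext; simp only [Fin.val_mk]; rw [he4r])
    · have hr' : (r:ℕ) = n-k := by have := r.isLt; omega
      rw [snoc_apply_eq (α := ℝ → ℝ) _ _ _ (show ((e4 (Sum.inr r) : Fin (n+1)) : ℕ) = n from by
        rw [he4r]; omega)]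
      rw [hψdef, snoc_apply_eq _ _ _ hr']
  have h3a : (Matrix.fromBlocks Amat Bmat Cmat Dmat).det = Phi (Fin.snoc ω f) w := by
    show _ = (Matrix.of fun i p => (Fin.snoc ω f : Fin (n+1) → ℝ → ℝ) i (w p)).det
    rw [← Matrix.det_submatrix_equiv_self e4]
    congr 1
    ext rc pc
    rcases rc with r | r <;> rcases pc with c | c <;>
      simp only [Matrix.submatrix_apply, Matrix.fromBlocks_apply₁₁, Matrix.fromBlocks_apply₁₂,
        Matrix.fromBlocks_apply₂₁, Matrix.fromBlocks_apply₂₂, Matrix.of_apply]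
    · rw [hrowl, hwl]; rfl
    · rw [hrowl, hwr]; rfl
    · rw [hrowr, hwl]; rfl
    · rw [hrowr, hwr]; rfl
  have hnl1 : ℓ + ((n-ℓ)+1) = n + 1 := by omega
  set e5 : Fin ℓ ⊕ Fin ((n-ℓ)+1) ≃ Fin (n+1) := finSumFinEquiv.trans (finCongr hnl1) with he5def
  set π : Equiv.Perm (Fin (n+1)) :=
    e5.permCongr (Equiv.sumCongr (Equiv.refl (Fin ℓ)) ((finRotate ((n-ℓ)+1))^(n-k+1))) with hπdef
  have he5l : ∀ i : Fin ℓ, ((e5 (Sum.inl i) : Fin (n+1)) : ℕ) = (i:ℕ) := by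
    intro i; simp [he5def]
  have he5r : ∀ q : Fin ((n-ℓ)+1), ((e5 (Sum.inr q) : Fin (n+1)) : ℕ) = ℓ + q := by
    intro q; simp [he5def]
  have hπval : ∀ p : Fin (n+1), ((π p : Fin (n+1)) : ℕ)
      = if (p:ℕ) < ℓ then (p:ℕ)
        else (if (p:ℕ) < k then (p:ℕ) + (n-k) + 1 else ℓ + ((p:ℕ) - k)) := by
    intro p
    rcases Nat.lt_or_ge (p:ℕ) ℓ with h | h
    · have hsymm : e5.symm p = Sum.inl ⟨p, h⟩ := by
        rw [Equiv.symm_apply_eq]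
        apply Fin.ext
        rw [he5l]
      rw [hπdef, Equiv.permCongr_apply, hsymm]
      simp only [Equiv.sumCongr_apply, Sum.map_inl, Equiv.refl_apply]
      rw [he5l, if_pos h]
    · have hsymm : e5.symm p = Sum.inr ⟨(p:ℕ) - ℓ, by have := p.isLt; omega⟩ := by
        rw [Equiv.symm_apply_eq]
        apply Fin.ext
        rw [he5r]
        simp only [Fin.val_mk]
        omega
      rw [hπdef, Equiv.permCongr_apply, hsymm]
      simp only [Equiv.sumCongr_apply, Sum.map_inr]
      rw [he5r, finRotate_pow_val (n-ℓ) (n-k+1) _]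
      simp only [Fin.val_mk]
      rw [if_neg (by omega)]
      have hple := p.isLt
      rcases Nat.lt_or_ge (p:ℕ) k with h2 | h2
      · rw [if_pos h2, Nat.mod_eq_of_lt (by omega)]
        omega
      · rw [if_neg (by omega)]
        have harith : (p:ℕ) - ℓ + (n-k+1) = ((p:ℕ) - k) + ((n-ℓ)+1) := by omega
        rw [harith, Nat.add_mod_right, Nat.mod_eq_of_lt (by omega)]
  have hwz : ∀ p, w p = z (π p) := by
    intro p
    have hv := hπval p
    rcases Nat.lt_or_ge (p:ℕ) k with h1 | h1
    · rcases Nat.lt_or_ge (p:ℕ) ℓ with h2 | h2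
      · rw [if_pos h2] at hv
        rw [hwdef]
        dsimp only
        rw [dif_pos h1, hxdef]
        dsimp only
        split_ifs with h2' <;>
          exact congrArg z (by apply Fin.ext; simp only [Fin.val_mk] at *; omega)
      · rw [if_neg (by omega), if_pos h1] at hv
        rw [hwdef]
        dsimp only
        rw [dif_pos h1, hxdef]
        dsimp only
        split_ifs with h2' <;>
          exact congrArg z (by apply Fin.ext; simp only [Fin.val_mk] at *; omega)
    · rw [if_neg (by omega), if_neg (by omega)] at hv
      rw [hwdef]
      dsimp only
      rw [dif_neg (by omega), hydef]
      dsimp only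
      exact congrArg z (by apply Fin.ext; simp only [Fin.val_mk] at *; omega)
  have h3b : Phi (Fin.snoc ω f) w = ((-1:ℝ))^((n-ℓ)*(n-k+1)) * Phi (Fin.snoc ω f) z := by
    have hmat : (Matrix.of fun i p => (Fin.snoc ω f : Fin (n+1) → ℝ → ℝ) i (w p))
        = (Matrix.of fun i p => (Fin.snoc ω f : Fin (n+1) → ℝ → ℝ) i (z p)).submatrix id π := by
      ext i p
      simp only [Matrix.submatrix_apply, Matrix.of_apply, id_eq]
      rw [hwz p]
    have hdet2 : Phi (Fin.snoc ω f) w = ((Equiv.Perm.sign π : ℤ) : ℝ) * Phi (Fin.snoc ω f) z := by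
      show (Matrix.of fun i p => (Fin.snoc ω f : Fin (n+1) → ℝ → ℝ) i (w p)).det = _
      rw [hmat, Matrix.det_permute']
      rfl
    have hsgn2 : Equiv.Perm.sign π = ((-1)^((n-ℓ)*(n-k+1)) : ℤˣ) := by
      rw [hπdef, Equiv.Perm.sign_permCongr, Equiv.Perm.sign_sumCongr, map_pow]
      simp [sign_finRotate, ← pow_mul]
    rw [hdet2, hsgn2]
    norm_num
  -- final assembly
  set Pprod : ℝ := ∏ jj, Phi ωk1 (Fin.snoc x (y jj)) with hPproddef
  set Qprod : ℝ := ∏ jj, Phi ωk1 (s jj) with hQproddef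
  have hQpos : 0 < Qprod := Finset.prod_pos (fun jj _ => hQ jj)
  have hPprodeq : Pprod = ((-1:ℝ)^(k-ℓ))^(n-k+1) * Qprod := by
    rw [hPproddef, hQproddef, Finset.prod_congr rfl (fun jj _ => hPsign jj),
      Finset.prod_mul_distrib, Finset.prod_const, Finset.card_univ, Fintype.card_fin]
  have hPne : Pprod ≠ 0 := by
    rw [hPprodeq]
    exact mul_ne_zero (pow_ne_zero _ (pow_ne_zero _ (by norm_num))) hQpos.ne'
  rw [show (∏ jj, (Phi ωk1 (Fin.snoc x (y jj)))⁻¹) = Pprod⁻¹ from by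
    rw [hPproddef, Finset.prod_inv_distrib]] at step1
  have hEnn : 0 ≤ Emat.det * Pprod := by
    have h0 : 0 ≤ (Pprod⁻¹ * Emat.det) * (Pprod * Pprod) := by
      apply mul_nonneg _ (mul_self_nonneg _)
      rw [← step1]
      exact hG
    calc (0:ℝ) ≤ (Pprod⁻¹ * Emat.det) * (Pprod * Pprod) := h0
      _ = Emat.det * Pprod := by field_simp
  have e1 : Emat.det * Amat.det
      = Amat.det^(n-k+1) * ((-1:ℝ)^((n-ℓ)*(n-k+1)) * Phi (Fin.snoc ω f) z) := by
    rw [step2, h3a, h3b]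
  have hc : ((-1:ℝ))^((n-ℓ)*(n-k+1)) * ((-1:ℝ)^(k-ℓ))^(n-k+1) = 1 := by
    rw [← pow_mul, ← pow_add]
    apply Even.neg_one_pow
    obtain ⟨t, ht⟩ := Nat.even_mul_succ_self (n-k)
    have h1 : (n-ℓ) * (n-k+1) = (k-ℓ)*(n-k+1) + (n-k)*(n-k+1) := by
      rw [← Nat.add_mul]
      congr 1
      omega
    rw [h1]
    exact ⟨(k-ℓ)*(n-k+1) + t, by omega⟩
  have hfin : Emat.det * Pprod * Amat.det
      = Amat.det^(n-k+1) * Qprod * Phi (Fin.snoc ω f) z := by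
    calc Emat.det * Pprod * Amat.det
        = (Emat.det * Amat.det) * (((-1:ℝ)^(k-ℓ))^(n-k+1) * Qprod) := by rw [hPprodeq]; ring
      _ = Amat.det^(n-k+1) * ((-1:ℝ)^((n-ℓ)*(n-k+1)) * Phi (Fin.snoc ω f) z)
            * (((-1:ℝ)^(k-ℓ))^(n-k+1) * Qprod) := by rw [e1]
      _ = Amat.det^(n-k+1) * Qprod * Phi (Fin.snoc ω f) z
            * ((-1:ℝ)^((n-ℓ)*(n-k+1)) * ((-1:ℝ)^(k-ℓ))^(n-k+1)) := by ring
      _ = Amat.det^(n-k+1) * Qprod * Phi (Fin.snoc ω f) z := by rw [hc, mul_one]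
  have hfinal : 0 ≤ Amat.det^(n-k+1) * Qprod * Phi (Fin.snoc ω f) z := by
    rw [← hfin]
    exact mul_nonneg hEnn hAdet.le
  nlinarith [pow_pos hAdet (n-k+1), mul_pos (pow_pos hAdet (n-k+1)) hQpos, hfinal]
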